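/- Every torsion-free abelian group G admits a pure embedding into a torsion-free algebraically compact abelian group, i.e., there exist a torsion-free abelian group H that is algebraically compact and an injective group homomorphism G → H whose image is a pure subgroup of H. -/

import Mathlib

/-- `H` is a pure subgroup: `nG ∩ H = nH` for every `n : ℕ`. -/
def AddSubgroup.IsPure {G : Type*} [AddCommGroup G] (H : AddSubgroup G) : Prop :=
  ∀ (n : ℕ), ∀ h ∈ H, (∃ g : G, n • g = h) → ∃ h' ∈ H, n • h' = h

/-- A countable system of `ℤ`-linear equations
`∑_{j < len i} coeff i j • x (var i j) = const i` (for `i < ω`). -/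
structure LinearSystem (G : Type*) [AddCommGroup G] where
  len : ℕ → ℕ
  coeff : (i : ℕ) → Fin (len i) → ℤ
  var : (i : ℕ) → Fin (len i) → ℕ
  const : ℕ → G

/-- `x` is a solution of the system `E`. -/
def LinearSystem.IsSolution {G : Type*} [AddCommGroup G] (E : LinearSystem G) (x : ℕ → G) : Prop :=
  ∀ i : ℕ, ∑ j : Fin (E.len i), E.coeff i j • x (E.var i j) = E.const i

/-- Every finite subsystem of `E` has a solution. -/
def LinearSystem.FinitelySolvable {G : Type*} [AddCommGroup G] (E : LinearSystem G) : Prop :=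
  ∀ s : Finset ℕ, ∃ x : ℕ → G,
    ∀ i ∈ s, ∑ j : Fin (E.len i), E.coeff i j • x (E.var i j) = E.const i

/-- `G` is algebraically compact: every countable system of `ℤ`-linear equations over `G`
that is finitely solvable in `G` is solvable in `G`. -/
def IsAlgCompact (G : Type*) [AddCommGroup G] : Prop :=
  ∀ E : LinearSystem G, E.FinitelySolvable → ∃ x : ℕ → G, E.IsSolution x

universe u

noncomputable section PureEmbAux

namespace PureEmbAux

/-- Extension of circle-valued characters along injections (Baer's criterion /
divisibility of the circle). -/
lemma ext_hom {X Y : Type*} [AddCommGroup X] [AddCommGroup Y] (f : X →+ Y)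
    (hf : Function.Injective f) (g : X →+ UnitAddCircle) :
    ∃ h : Y →+ UnitAddCircle, ∀ x, h (f x) = g x := by
  obtain ⟨h, hh⟩ := (Module.Baer.of_divisible (UnitAddCircle)).extension_property_addMonoidHom
    f hf g
  exact ⟨h, fun x => DFunLike.congr_fun hh x⟩

/-- The embedding of the rational circle into the real circle. -/
def ratToReal : AddCircle (1 : ℚ) →+ UnitAddCircle :=
  QuotientAddGroup.map _ _ (AddMonoidHom.mk' (fun q : ℚ => (q : ℝ)) (fun a b => by push_cast [Rat.cast_add]; ring))
    (by
      intro x hx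
      rcases AddSubgroup.mem_zmultiples_iff.mp hx with ⟨k, hk⟩
      refine AddSubgroup.mem_zmultiples_iff.mpr ⟨k, ?_⟩
      simp only [AddMonoidHom.mk'_apply, ← hk]
      push_cast [zsmul_eq_mul]
      simp)

lemma ratToReal_injective : Function.Injective ratToReal := by
  rw [injective_iff_map_eq_zero]
  intro q hq
  induction q using QuotientAddGroup.induction_on with
  | H q =>
    rw [ratToReal, QuotientAddGroup.map_mk] at hq
    rw [QuotientAddGroup.eq_zero_iff] at hq ⊢
    rcases AddSubgroup.mem_zmultiples_iff.mp hq with ⟨k, hk⟩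
    refine AddSubgroup.mem_zmultiples_iff.mpr ⟨k, ?_⟩
    have hkq : ((k : ℚ) : ℝ) = (q : ℝ) := by
      push_cast
      simpa [zsmul_eq_mul] using hk
    have hq : (k : ℚ) = q := Rat.cast_injective hkq
    simp [← hq, zsmul_eq_mul]

/-- Enough characters into the real circle. -/
lemma enough_chars {A : Type*} [AddCommGroup A] {a : A} (ha : a ≠ 0) :
    ∃ χ : A →+ UnitAddCircle, χ a ≠ 0 := by
  obtain ⟨c, hc⟩ := CharacterModule.exists_character_apply_ne_zero_of_ne_zero ha
  refine ⟨ratToReal.comp (c : A →+ AddCircle (1 : ℚ)), ?_⟩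
  show ratToReal (c a) ≠ 0
  intro h
  exact hc (ratToReal_injective (by simpa using h))

/-- The evaluation map into the double character dual. -/
def evalHom (G : Type*) [AddCommGroup G] :
    G →+ ((G →+ UnitAddCircle) →+ UnitAddCircle) where
  toFun g :=
    { toFun := fun χ => χ g
      map_zero' := rfl
      map_add' := fun _ _ => rfl }
  map_zero' := by ext χ; exact map_zero χ
  map_add' g g' := by ext χ; exact map_add χ g g'

@[simp] lemma evalHom_apply {G : Type*} [AddCommGroup G] (g : G) (χ : G →+ UnitAddCircle) :
    evalHom G g χ = χ g := rfl

/-- Character duals are algebraically compact: topological compactness argument. -/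
theorem isAlgCompact_dual (A : Type*) [AddCommGroup A] :
    IsAlgCompact (A →+ UnitAddCircle) := by
  intro E hfs
  let X := ℕ → A → UnitAddCircle
  let K : Finset ℕ → Set X := fun s =>
    {x | (∀ k a b, x k (a + b) = x k a + x k b) ∧
      ∀ i ∈ s, ∀ a, ∑ j : Fin (E.len i), E.coeff i j • x (E.var i j) a = E.const i a}
  have hev : ∀ (k : ℕ) (a : A), Continuous fun x : X => x k a := fun k a =>
    (continuous_apply a).comp (continuous_apply k)
  have hclosed : ∀ s, IsClosed (K s) := by
    intro s
    have h1 : IsClosed {x : X | ∀ k a b, x k (a + b) = x k a + x k b} := by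
      have : {x : X | ∀ k a b, x k (a + b) = x k a + x k b} =
          ⋂ (k) (a) (b), {x : X | x k (a + b) = x k a + x k b} := by
        ext x; simp [Set.mem_iInter]
      rw [this]
      exact isClosed_iInter fun k => isClosed_iInter fun a => isClosed_iInter fun b =>
        isClosed_eq (hev k _) ((hev k a).add (hev k b))
    have h2 : IsClosed {x : X | ∀ i ∈ s, ∀ a,
        ∑ j : Fin (E.len i), E.coeff i j • x (E.var i j) a = E.const i a} := by
      have : {x : X | ∀ i ∈ s, ∀ a,
          ∑ j : Fin (E.len i), E.coeff i j • x (E.var i j) a = E.const i a} =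
          ⋂ (i ∈ s) (a), {x : X |
            ∑ j : Fin (E.len i), E.coeff i j • x (E.var i j) a = E.const i a} := by
        ext x; simp [Set.mem_iInter]
      rw [this]
      refine isClosed_iInter fun i => isClosed_iInter fun hi => isClosed_iInter fun a =>
        isClosed_eq ?_ continuous_const
      exact continuous_finset_sum _ fun j _ => (continuous_zsmul _).comp (hev _ a)
    exact h1.inter h2
  have hne : ∀ s, (K s).Nonempty := by
    intro s
    obtain ⟨x₀, hx₀⟩ := hfs s
    refine ⟨fun k a => x₀ k a, fun k a b => map_add (x₀ k) a b, fun i hi a => ?_⟩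
    have := hx₀ i hi
    calc ∑ j : Fin (E.len i), E.coeff i j • (x₀ (E.var i j)) a
        = (∑ j : Fin (E.len i), E.coeff i j • x₀ (E.var i j)) a := by
          rw [AddMonoidHom.finset_sum_apply]; rfl
      _ = E.const i a := by rw [this]
  have hdir : Directed (· ⊇ ·) K := by
    intro s t
    refine ⟨s ∪ t, fun x hx => ⟨hx.1, fun i hi a => hx.2 i (Finset.mem_union_left _ hi) a⟩,
      fun x hx => ⟨hx.1, fun i hi a => hx.2 i (Finset.mem_union_right _ hi) a⟩⟩
  obtain ⟨x, hx⟩ := IsCompact.nonempty_iInter_of_directed_nonempty_isCompact_isClosed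
    K hdir hne (fun s => (hclosed s).isCompact) hclosed
  have hx' : ∀ s, x ∈ K s := Set.mem_iInter.mp hx
  refine ⟨fun k => AddMonoidHom.mk' (x k) (fun a b => (hx' ∅).1 k a b), fun i => ?_⟩
  apply AddMonoidHom.ext
  intro a
  have := (hx' {i}).2 i (Finset.mem_singleton_self i) a
  calc (∑ j : Fin (E.len i), E.coeff i j •
          AddMonoidHom.mk' (x (E.var i j)) (fun a b => (hx' ∅).1 _ a b)) a
      = ∑ j : Fin (E.len i), E.coeff i j • x (E.var i j) a := by
        rw [AddMonoidHom.finset_sum_apply]; rfl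
    _ = E.const i a := this

end PureEmbAux

end PureEmbAux

open PureEmbAux

/-- Every torsion-free abelian group purely embeds into a torsion-free algebraically
compact abelian group. -/
theorem exists_pure_embedding_into_algCompact
    (G : Type u) [AddCommGroup G] [NoZeroSMulDivisors ℤ G] :
    ∃ (H : Type u) (_ : AddCommGroup H), NoZeroSMulDivisors ℤ H ∧ IsAlgCompact H ∧
      ∃ f : G →+ H, Function.Injective f ∧ f.range.IsPure := by
  classical
  refine ⟨(G →+ UnitAddCircle) →+ UnitAddCircle, inferInstance, ?_, isAlgCompact_dual _,
    evalHom G, ?_, ?_⟩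
  · -- torsion-freeness of the double dual
    constructor
    intro c ξ hcξ
    rcases eq_or_ne c 0 with rfl | hc
    · exact Or.inl rfl
    right
    ext χ
    obtain ⟨ψ, hψ⟩ := ext_hom (AddMonoidHom.mk' (fun g : G => c • g)
      (fun a b => smul_add c a b)) (smul_right_injective G hc) χ
    have hcψ : c • ψ = χ := by
      ext g
      have : (c • ψ) g = ψ (c • g) := (map_zsmul ψ c g).symm
      rw [this]
      exact hψ g
    have : ξ χ = (c • ξ) ψ := by
      rw [← hcψ, map_zsmul ξ c ψ]
      rfl
    rw [this, hcξ]
    rfl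
  · -- injectivity
    rw [injective_iff_map_eq_zero]
    intro g hg
    by_contra hg0
    obtain ⟨χ, hχ⟩ := enough_chars hg0
    exact hχ (by rw [← evalHom_apply g χ, hg]; rfl)
  · -- purity
    intro n h hh hdiv
    obtain ⟨g, rfl⟩ := hh
    by_cases hg' : ∃ g', n • g' = g
    · obtain ⟨g', rfl⟩ := hg'
      exact ⟨evalHom G g', ⟨g', rfl⟩, by rw [← map_nsmul]⟩
    exfalso
    obtain ⟨v, hv⟩ := hdiv
    -- the subgroup n•G
    set S : AddSubgroup G := (AddMonoidHom.mk' (fun g : G => (n : ℤ) • g)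
      (fun a b => smul_add _ a b)).range with hS
    have hgS : (QuotientAddGroup.mk' S) g ≠ 0 := by
      intro h0
      rw [QuotientAddGroup.mk'_apply, QuotientAddGroup.eq_zero_iff] at h0
      obtain ⟨y, hy⟩ := h0
      exact hg' ⟨y, by simpa [natCast_zsmul] using hy⟩
    obtain ⟨χ', hχ'⟩ := enough_chars hgS
    set χ : G →+ UnitAddCircle := χ'.comp (QuotientAddGroup.mk' S) with hχdef
    have hnχ : n • χ = 0 := by
      ext x
      have h1 : (n • χ) x = n • χ x := rfl
      have h2 : n • χ x = χ' (n • (QuotientAddGroup.mk' S) x) := by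
        rw [map_nsmul]
        rfl
      have h3 : n • (QuotientAddGroup.mk' S) x = 0 := by
        rw [← map_nsmul, QuotientAddGroup.mk'_apply, QuotientAddGroup.eq_zero_iff]
        exact ⟨x, by simp [natCast_zsmul]⟩
      rw [h1, h2, h3, map_zero]
      rfl
    have : χ g = 0 := by
      have e1 : χ g = (evalHom G g) χ := rfl
      have e2 : (evalHom G g) χ = (n • v) χ := by rw [hv]
      have e3 : (n • v) χ = n • v χ := rfl
      have e4 : n • v χ = v (n • χ) := (map_nsmul v n χ).symm
      rw [e1, e2, e3, e4, hnχ, map_zero]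
    exact hχ' (by rwa [hχdef, AddMonoidHom.comp_apply] at this)
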